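/- Let x ∈ bd K_{n+1} with x ≠ 0 and let y ∈ K_{n+1} satisfy ⟨x, y⟩ = 0. Then there exists α ≥ 0 such that y = α x̂. -/

import Mathlib

open scoped RealInnerProductSpace

/-- Euclidean norm of the tail `x₁` of `x = (x₀; x₁) ∈ ℝ × ℝⁿ`. -/
noncomputable def tailNorm {n : ℕ} (x : EuclideanSpace ℝ (Fin (n + 1))) : ℝ :=
  Real.sqrt (∑ i : Fin n, x i.succ ^ 2)

/-- The second-order cone `K_{n+1} = {(x₀; x₁) : ‖x₁‖ ≤ x₀}`. -/
def soc (n : ℕ) : Set (EuclideanSpace ℝ (Fin (n + 1))) :=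
  {x | tailNorm x ≤ x 0}

/-- The boundary of the second-order cone: `{(x₀; x₁) : ‖x₁‖ = x₀}`. -/
def socBd (n : ℕ) : Set (EuclideanSpace ℝ (Fin (n + 1))) :=
  {x | tailNorm x = x 0}

/-- `x̂ = (x₀; −x₁)` for `x = (x₀; x₁)`. -/
def socHat {n : ℕ} (x : EuclideanSpace ℝ (Fin (n + 1))) : EuclideanSpace ℝ (Fin (n + 1)) :=
  WithLp.toLp 2 (fun i => if i = 0 then x 0 else -(x i))

/-- If `x ∈ bd K_{n+1}`, `x ≠ 0`, `y ∈ K_{n+1}` and `⟨x, y⟩ = 0`, then `y = α x̂` for some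
`α ≥ 0`. -/
theorem stmt0 (n : ℕ) (x y : EuclideanSpace ℝ (Fin (n + 1)))
    (hx : x ∈ socBd n) (hx0 : x ≠ 0) (hy : y ∈ soc n)
    (hxy : ⟪x, y⟫ = 0) :
    ∃ α : ℝ, 0 ≤ α ∧ y = α • socHat x := by
  have hx' : Real.sqrt (∑ i : Fin n, x i.succ ^ 2) = x 0 := hx
  have hy' : Real.sqrt (∑ i : Fin n, y i.succ ^ 2) ≤ y 0 := hy
  have hxs : (0:ℝ) ≤ ∑ i : Fin n, x i.succ ^ 2 :=
    Finset.sum_nonneg fun i _ => sq_nonneg _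
  have hys : (0:ℝ) ≤ ∑ i : Fin n, y i.succ ^ 2 :=
    Finset.sum_nonneg fun i _ => sq_nonneg _
  have hx0nn : 0 ≤ x 0 := hx' ▸ Real.sqrt_nonneg _
  have hy0nn : 0 ≤ y 0 := le_trans (Real.sqrt_nonneg _) hy'
  -- x 0 > 0
  have hx0pos : 0 < x 0 := by
    rcases hx0nn.lt_or_eq with h | h
    · exact h
    · exfalso
      apply hx0
      have hs0 : ∑ i : Fin n, x i.succ ^ 2 = 0 := by
        have : Real.sqrt (∑ i : Fin n, x i.succ ^ 2) = 0 := by rw [hx', ← h]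
        have := Real.sqrt_eq_zero hxs |>.mp this
        exact this
      have hterm := (Finset.sum_eq_zero_iff_of_nonneg
        (fun i _ => sq_nonneg (x i.succ))).mp hs0
      ext i
      refine Fin.cases ?_ ?_ i
      · exact h.symm
      · intro j
        have := hterm j (Finset.mem_univ j)
        have := pow_eq_zero_iff (n := 2) (by norm_num) |>.mp this
        simpa using this
  -- squared equalities / inequalities
  have hxsq : ∑ i : Fin n, x i.succ ^ 2 = x 0 ^ 2 := by
    have := congrArg (· ^ 2) hx'
    simpa [Real.sq_sqrt hxs] using this
  have hysq : ∑ i : Fin n, y i.succ ^ 2 ≤ y 0 ^ 2 := by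
    have := pow_le_pow_left₀ (Real.sqrt_nonneg _) hy' 2
    simpa [Real.sq_sqrt hys] using this
  -- expand the inner product
  have hinner : x 0 * y 0 + ∑ i : Fin n, x i.succ * y i.succ = 0 := by
    have : ∑ i : Fin (n+1), x i * y i = 0 := by
      rw [← hxy, PiLp.inner_apply]
      simp [RCLike.inner_apply, mul_comm]
    rwa [Fin.sum_univ_succ] at this
  set α : ℝ := y 0 / x 0 with hα
  have hαnn : 0 ≤ α := div_nonneg hy0nn hx0pos.le
  have hα0 : α * x 0 = y 0 := by rw [hα, div_mul_cancel₀ _ hx0pos.ne']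
  -- key: tail sum of squares of (y + α x) is ≤ 0
  have hkey : ∑ i : Fin n, (y i.succ + α * x i.succ) ^ 2 ≤ 0 := by
    have hexp : ∑ i : Fin n, (y i.succ + α * x i.succ) ^ 2 =
        (∑ i : Fin n, y i.succ ^ 2) + 2 * α * (∑ i : Fin n, x i.succ * y i.succ)
          + α ^ 2 * (∑ i : Fin n, x i.succ ^ 2) := by
      rw [Finset.mul_sum, Finset.mul_sum, ← Finset.sum_add_distrib,
        ← Finset.sum_add_distrib]
      apply Finset.sum_congr rfl
      intro i _
      ring
    rw [hexp, hxsq]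
    have hS : ∑ i : Fin n, x i.succ * y i.succ = -(x 0 * y 0) := by linarith
    rw [hS]
    nlinarith [hα0, sq_nonneg (y 0)]
  have hzero : ∀ i : Fin n, y i.succ + α * x i.succ = 0 := by
    intro i
    have hsum0 : ∑ i : Fin n, (y i.succ + α * x i.succ) ^ 2 = 0 :=
      le_antisymm hkey (Finset.sum_nonneg fun i _ => sq_nonneg _)
    have := (Finset.sum_eq_zero_iff_of_nonneg
      (fun i _ => sq_nonneg (y i.succ + α * x i.succ))).mp hsum0 i (Finset.mem_univ i)
    exact pow_eq_zero_iff (n := 2) (by norm_num) |>.mp this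
  refine ⟨α, hαnn, ?_⟩
  ext i
  refine Fin.cases ?_ ?_ i
  · show y 0 = α * socHat x 0
    simp only [socHat, WithLp.ofLp_toLp, if_pos rfl]
    exact hα0.symm
  · intro j
    show y j.succ = α * socHat x j.succ
    simp only [socHat, WithLp.ofLp_toLp, if_neg (Fin.succ_ne_zero j)]
    have := hzero j
    linarith
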